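/- Let D_loc ⊆ ℝ^{d×l} be a nonempty compact set that is invariant under column-wise left multiplication by every orthogonal matrix: for every orthogonal R ∈ ℝ^{d×d} and every v = (v¹|…|v^l) ∈ D_loc, the matrix (Rv¹|…|Rv^l) lies in D_loc. Let Ψ(z) := sup_{v ∈ D_loc} ⟨z, v⟩ denote the support function of D_loc with respect to the Frobenius inner product. Then for all a, b ∈ ℝ^l and every unit vector y ∈ ℝ^d, sup_{v ∈ D_loc} ‖v(b − a)‖ = Ψ(y(b − a)ᵀ), where v(b − a) ∈ ℝ^d is the matrix-vector product and y(b − a)ᵀ ∈ ℝ^{d×l} is the rank-one matrix with entries y_r·(b − a)_c. -/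

import Mathlib

/- STATEMENT 7: For a nonempty compact set `D_loc ⊆ ℝ^{m×l}` invariant under
column-wise left multiplication by orthogonal matrices, with support function
`Ψ(z) = sup_{v ∈ D_loc} ⟨z, v⟩` (Frobenius inner product): for all `a, b ∈ ℝ^l`
and every unit vector `y ∈ ℝ^m`,
`sup_{v ∈ D_loc} ‖v (b - a)‖ = Ψ (y (b - a)ᵀ)`. -/
open Matrix

lemma vecMulVec_mul_vecMulVec' {m : ℕ} (u : Fin m → ℝ) :
    vecMulVec u u * vecMulVec u u = (∑ k, u k ^ 2) • vecMulVec u u := by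
  ext i j
  simp only [mul_apply, vecMulVec_apply, Matrix.smul_apply, smul_eq_mul, Finset.sum_mul,
    Finset.mul_sum]
  exact Finset.sum_congr rfl fun k _ => by ring

lemma vecMulVec_mulVec' {m : ℕ} (u x : Fin m → ℝ) :
    (vecMulVec u u).mulVec x = (∑ k, u k * x k) • u := by
  ext i
  simp only [mulVec, dotProduct, vecMulVec_apply, Pi.smul_apply, smul_eq_mul]
  rw [Finset.sum_mul]
  exact Finset.sum_congr rfl fun k _ => by ring

lemma exists_orth {m : ℕ} (x y : Fin m → ℝ)
    (hxy : ∑ r, x r ^ 2 = ∑ r, y r ^ 2) :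
    ∃ R : Matrix (Fin m) (Fin m) ℝ, Rᵀ * R = 1 ∧ R.mulVec x = y := by
  by_cases hxe : x = y
  · exact ⟨1, by simp, by simp [hxe]⟩
  · set u : Fin m → ℝ := x - y with hu
    set s : ℝ := ∑ k, u k ^ 2 with hs
    have hs0 : s ≠ 0 := by
      intro h
      apply hxe
      rw [hs, Finset.sum_eq_zero_iff_of_nonneg (fun k _ => sq_nonneg _)] at h
      funext k
      have h1 := h k (Finset.mem_univ k)
      have h2 : u k = 0 := by nlinarith [h1]
      simpa [hu, sub_eq_zero] using h2
    set c : ℝ := 2 / s with hc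
    set A : Matrix (Fin m) (Fin m) ℝ := vecMulVec u u with hA
    have hAsym : Aᵀ = A := by
      ext i j; simp [hA, vecMulVec_apply]; ring
    set R : Matrix (Fin m) (Fin m) ℝ := 1 - c • A with hR
    have hsym : Rᵀ = R := by
      rw [hR, transpose_sub, transpose_one, transpose_smul, hAsym]
    have hdot : s = 2 * ∑ k, u k * x k := by
      have h3 : ∑ k, u k ^ 2 - 2 * ∑ k, u k * x k
          = ∑ k, (y k ^ 2 - x k ^ 2) := by
        rw [Finset.mul_sum, ← Finset.sum_sub_distrib]
        exact Finset.sum_congr rfl fun k _ => by simp [hu]; ring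
      have h2 : ∑ k, (y k ^ 2 - x k ^ 2) = 0 := by
        rw [Finset.sum_sub_distrib, hxy, sub_self]
      rw [h2] at h3
      rw [hs]; linarith
    have hcs : c * s = 2 := by rw [hc]; field_simp
    refine ⟨R, ?_, ?_⟩
    · rw [hsym, hR]
      have e1 : (1 - c • A) * A = A - c • (A * A) := by
        rw [sub_mul, one_mul, smul_mul_assoc]
      have e2 : (1 - c • A) * (1 - c • A) = (1 - c • A) - c • ((1 - c • A) * A) := by
        rw [mul_sub, mul_one, mul_smul_comm]
      rw [e2, e1, show A * A = s • A from by rw [hA, vecMulVec_mul_vecMulVec', ← hs, ← hA],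
        smul_sub, smul_smul, smul_smul,
        show c * c * s = c + c from by rw [mul_assoc, hcs]; ring, add_smul]
      abel
    · rw [hR, sub_mulVec, one_mulVec, smul_mulVec, hA, vecMulVec_mulVec',
        smul_smul, show c * ∑ k, u k * x k = 1 from by
          rw [hc]; field_simp; linarith [hdot], one_smul]
      rw [hu]; abel

open Matrix in
theorem stmt7 (m l : ℕ) (hm : 0 < m) (hl : 0 < l)
    (Dloc : Set (Matrix (Fin m) (Fin l) ℝ))
    (hne : Dloc.Nonempty) (hcomp : IsCompact Dloc)
    (hinv : ∀ R : Matrix (Fin m) (Fin m) ℝ, Rᵀ * R = 1 →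
      ∀ v ∈ Dloc, R * v ∈ Dloc)
    (a b : Fin l → ℝ) (y : Fin m → ℝ)
    (hy : Real.sqrt (∑ r, y r ^ 2) = 1) :
    sSup {x : ℝ | ∃ v ∈ Dloc, x = Real.sqrt (∑ r, (v.mulVec (b - a)) r ^ 2)}
      = sSup {x : ℝ | ∃ v ∈ Dloc,
          x = ∑ r, ∑ c, (Matrix.vecMulVec y (b - a)) r c * v r c} := by
  set w : Fin l → ℝ := b - a with hw
  set f : Matrix (Fin m) (Fin l) ℝ → ℝ :=
    fun v => Real.sqrt (∑ r, (v.mulVec w) r ^ 2) with hf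
  set g : Matrix (Fin m) (Fin l) ℝ → ℝ :=
    fun v => ∑ r, ∑ c, (vecMulVec y w) r c * v r c with hg
  have hy2 : ∑ r, y r ^ 2 = 1 := by
    have h0 : (0:ℝ) ≤ ∑ r, y r ^ 2 := Finset.sum_nonneg fun r _ => sq_nonneg _
    nlinarith [Real.sq_sqrt h0, hy]
  -- g v = ∑ r, y r * (v.mulVec w) r
  have hgeq : ∀ v : Matrix (Fin m) (Fin l) ℝ,
      g v = ∑ r, y r * (v.mulVec w) r := by
    intro v
    rw [hg]
    refine Finset.sum_congr rfl fun r _ => ?_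
    simp only [vecMulVec_apply, mulVec, dotProduct, Finset.mul_sum]
    exact Finset.sum_congr rfl fun c _ => by ring
  -- Cauchy-Schwarz: g v ≤ f v
  have hle : ∀ v : Matrix (Fin m) (Fin l) ℝ, g v ≤ f v := by
    intro v
    rw [hgeq v, hf]
    set t : Fin m → ℝ := v.mulVec w with ht
    have ht0 : (0:ℝ) ≤ ∑ r, t r ^ 2 := Finset.sum_nonneg fun r _ => sq_nonneg _
    calc ∑ r, y r * t r ≤ Real.sqrt ((∑ r, y r * t r) ^ 2) := by
          rw [Real.sqrt_sq_eq_abs]; exact le_abs_self _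
      _ ≤ Real.sqrt ((∑ r, y r ^ 2) * ∑ r, t r ^ 2) := by
          apply Real.sqrt_le_sqrt
          have := Finset.sum_mul_sq_le_sq_mul_sq Finset.univ y t
          simpa [pow_two] using this
      _ = Real.sqrt (∑ r, t r ^ 2) := by rw [hy2, one_mul]
  -- For each v ∈ Dloc there is v' ∈ Dloc with g v' = f v
  have hex : ∀ v ∈ Dloc, ∃ v' ∈ Dloc, g v' = f v := by
    intro v hv
    set t : Fin m → ℝ := v.mulVec w with ht
    have ht0 : (0:ℝ) ≤ ∑ r, t r ^ 2 := Finset.sum_nonneg fun r _ => sq_nonneg _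
    by_cases hz : ∑ r, t r ^ 2 = 0
    · refine ⟨v, hv, ?_⟩
      have htz : ∀ r, t r = 0 := by
        intro r
        have := (Finset.sum_eq_zero_iff_of_nonneg
          (fun r (_ : r ∈ Finset.univ) => sq_nonneg (t r))).mp hz r (Finset.mem_univ r)
        nlinarith [this]
      rw [hgeq v, hf]
      simp only [← ht, hz, Real.sqrt_zero]
      exact Finset.sum_eq_zero fun r _ => by rw [htz r, mul_zero]
    · set nt : ℝ := Real.sqrt (∑ r, t r ^ 2) with hnt
      have hntpos : 0 < nt := Real.sqrt_pos.mpr (lt_of_le_of_ne ht0 (Ne.symm hz))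
      set x : Fin m → ℝ := nt⁻¹ • t with hx
      have hxnorm : ∑ r, x r ^ 2 = ∑ r, y r ^ 2 := by
        rw [hy2, hx]
        have : ∑ r, (nt⁻¹ • t) r ^ 2 = nt⁻¹ ^ 2 * ∑ r, t r ^ 2 := by
          rw [Finset.mul_sum]
          exact Finset.sum_congr rfl fun r _ => by simp [Pi.smul_apply]; ring
        rw [this, show ∑ r, t r ^ 2 = nt ^ 2 from (Real.sq_sqrt ht0).symm]
        field_simp
      obtain ⟨R, hRorth, hRx⟩ := exists_orth x y hxnorm
      refine ⟨R * v, hinv R hRorth v hv, ?_⟩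
      have hmul : (R * v).mulVec w = nt • y := by
        rw [← Matrix.mulVec_mulVec, ← ht, show t = nt • x from by
          rw [hx, smul_smul, mul_inv_cancel₀ (ne_of_gt hntpos), one_smul],
          Matrix.mulVec_smul, hRx]
      rw [hgeq, hmul]
      show ∑ r, y r * (nt • y) r = nt
      calc ∑ r, y r * (nt • y) r = nt * ∑ r, y r ^ 2 := by
            rw [Finset.mul_sum]
            exact Finset.sum_congr rfl fun r _ => by simp [Pi.smul_apply]; ring
        _ = nt := by rw [hy2, mul_one]
  -- identify the two sets
  have hsetf : {x : ℝ | ∃ v ∈ Dloc, x = Real.sqrt (∑ r, (v.mulVec (b - a)) r ^ 2)}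
      = f '' Dloc := by
    ext x; constructor
    · rintro ⟨v, hv, rfl⟩; exact ⟨v, hv, rfl⟩
    · rintro ⟨v, hv, rfl⟩; exact ⟨v, hv, rfl⟩
  have hsetg : {x : ℝ | ∃ v ∈ Dloc,
      x = ∑ r, ∑ c, (Matrix.vecMulVec y (b - a)) r c * v r c} = g '' Dloc := by
    ext x; constructor
    · rintro ⟨v, hv, rfl⟩; exact ⟨v, hv, rfl⟩
    · rintro ⟨v, hv, rfl⟩; exact ⟨v, hv, rfl⟩
  rw [hsetf, hsetg]
  have hgc : Continuous g := by
    apply continuous_finset_sum; intro r _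
    apply continuous_finset_sum; intro c _
    exact continuous_const.mul ((continuous_apply c).comp (continuous_apply r))
  have hbddg : BddAbove (g '' Dloc) := (hcomp.image hgc).bddAbove
  have hsub : f '' Dloc ⊆ g '' Dloc := by
    rintro x ⟨v, hv, rfl⟩
    obtain ⟨v', hv', he⟩ := hex v hv
    exact ⟨v', hv', he⟩
  have hbddf : BddAbove (f '' Dloc) := hbddg.mono hsub
  apply le_antisymm
  · exact csSup_le_csSup hbddg (hne.image f) hsub
  · apply csSup_le (hne.image g)
    rintro x ⟨v, hv, rfl⟩
    exact le_trans (hle v) (le_csSup hbddf ⟨v, hv, rfl⟩)
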